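/- The image of an abstract observable function f : D(L) → ℝ is a compact subset of ℝ. -/
import Mathlib


def IsDualIdeal {L : Type} [Lattice L] [OrderBot L] (J : Set L) : Prop :=
  J.Nonempty ∧ ⊥ ∉ J ∧ (∀ a ∈ J, ∀ b ∈ J, a ⊓ b ∈ J) ∧ (∀ a ∈ J, ∀ b : L, a ≤ b → b ∈ J)

namespace Stmt10Aux

instance (n : ℕ) : Nonempty {m : ℕ // n ≤ m} := ⟨⟨n, le_rfl⟩⟩

variable {L : Type} [CompleteLattice L]

lemma top_mem {J : Set L} (h : IsDualIdeal J) : ⊤ ∈ J := by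
  obtain ⟨⟨a, ha⟩, -, -, hup⟩ := h
  exact hup a ha ⊤ le_top

lemma iInter_dual {ι : Type} [Nonempty ι] {J : ι → Set L} (h : ∀ i, IsDualIdeal (J i)) :
    IsDualIdeal (⋂ i, J i) := by
  refine ⟨⟨⊤, Set.mem_iInter.2 fun i => top_mem (h i)⟩, ?_, ?_, ?_⟩
  · intro hbot
    obtain ⟨i⟩ := ‹Nonempty ι›
    exact (h i).2.1 (Set.mem_iInter.1 hbot i)
  · intro a ha b hb
    exact Set.mem_iInter.2 fun i =>
      (h i).2.2.1 a (Set.mem_iInter.1 ha i) b (Set.mem_iInter.1 hb i)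
  · intro a ha b hab
    exact Set.mem_iInter.2 fun i => (h i).2.2.2 a (Set.mem_iInter.1 ha i) b hab

lemma iUnion_mono_dual {K : ℕ → Set L} (hm : Monotone K) (h : ∀ n, IsDualIdeal (K n)) :
    IsDualIdeal (⋃ n, K n) := by
  refine ⟨⟨⊤, Set.mem_iUnion.2 ⟨0, top_mem (h 0)⟩⟩, ?_, ?_, ?_⟩
  · intro hbot
    obtain ⟨n, hn⟩ := Set.mem_iUnion.1 hbot
    exact (h n).2.1 hn
  · intro a ha b hb
    obtain ⟨i, hi⟩ := Set.mem_iUnion.1 ha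
    obtain ⟨j, hj⟩ := Set.mem_iUnion.1 hb
    exact Set.mem_iUnion.2
      ⟨max i j, (h _).2.2.1 a (hm (le_max_left i j) hi) b (hm (le_max_right i j) hj)⟩
  · intro a ha b hab
    obtain ⟨i, hi⟩ := Set.mem_iUnion.1 ha
    exact Set.mem_iUnion.2 ⟨i, (h i).2.2.2 a hi b hab⟩

lemma f_antitone (f : Set L → ℝ)
    (hint : ∀ (ι : Type) [Nonempty ι] (J : ι → Set L), (∀ i, IsDualIdeal (J i)) →
      f (⋂ i, J i) = ⨆ i, f (J i))
    {J J' : Set L} (hJ : IsDualIdeal J) (hJ' : IsDualIdeal J') (hss : J ⊆ J') :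
    f J' ≤ f J := by
  have h1 : (⋂ b : Bool, cond b J J') = J := by
    ext x
    simp only [Set.mem_iInter, Bool.forall_bool, cond]
    exact ⟨fun h => h.2, fun h => ⟨hss h, h⟩⟩
  have h2 := hint Bool (fun b => cond b J J')
    (fun b => by cases b with | true => exact hJ | false => exact hJ')
  rw [h1] at h2
  rw [h2]
  exact le_ciSup (f := fun b : Bool => f (cond b J J')) (Set.Finite.bddAbove (Set.finite_range _)) false

lemma master (f : Set L → ℝ)
    (husc : ∀ J₀ : Set L, IsDualIdeal J₀ → ∀ ε : ℝ, 0 < ε →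
      ∃ P ∈ J₀, ∀ J : Set L, IsDualIdeal J → P ∈ J → f J < f J₀ + ε)
    (hint : ∀ (ι : Type) [Nonempty ι] (J : ι → Set L), (∀ i, IsDualIdeal (J i)) →
      f (⋂ i, J i) = ⨆ i, f (J i))
    (J : ℕ → Set L) (hJ : ∀ n, IsDualIdeal (J n)) :
    ∃ K : Set L, IsDualIdeal K ∧
      (∀ n : ℕ, f K ≤ ⨆ m : {m : ℕ // n ≤ m}, f (J m.1)) ∧
      (∀ ε : ℝ, 0 < ε → ∃ N : ℕ, (⨆ m : {m : ℕ // N ≤ m}, f (J m.1)) < f K + ε) := by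
  set Kn : ℕ → Set L := fun n => ⋂ m : {m : ℕ // n ≤ m}, J m.1 with hKndef
  have hKd : ∀ n, IsDualIdeal (Kn n) := fun n => iInter_dual (fun m => hJ m.1)
  have hfK : ∀ n, f (Kn n) = ⨆ m : {m : ℕ // n ≤ m}, f (J m.1) := fun n =>
    hint {m : ℕ // n ≤ m} _ (fun m => hJ m.1)
  have hmono : Monotone Kn := by
    intro a b hab x hx
    exact Set.mem_iInter.2 fun m => Set.mem_iInter.1 hx ⟨m.1, le_trans hab m.2⟩
  have hUd : IsDualIdeal (⋃ n, Kn n) := iUnion_mono_dual hmono hKd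
  refine ⟨⋃ n, Kn n, hUd, ?_, ?_⟩
  · intro n
    rw [← hfK n]
    exact f_antitone f hint (hKd n) hUd (Set.subset_iUnion Kn n)
  · intro ε hε
    obtain ⟨P, hP, hprop⟩ := husc _ hUd ε hε
    obtain ⟨N, hPN⟩ := Set.mem_iUnion.1 hP
    exact ⟨N, by rw [← hfK N]; exact hprop (Kn N) (hKd N) hPN⟩

end Stmt10Aux

open Stmt10Aux in
/-- The image of an abstract observable function is a compact subset of `ℝ`. -/
theorem stmt10 {L : Type} [CompleteLattice L] (f : Set L → ℝ)
    (husc : ∀ J₀ : Set L, IsDualIdeal J₀ → ∀ ε : ℝ, 0 < ε →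
      ∃ P ∈ J₀, ∀ J : Set L, IsDualIdeal J → P ∈ J → f J < f J₀ + ε)
    (hint : ∀ (ι : Type) [Nonempty ι] (J : ι → Set L), (∀ i, IsDualIdeal (J i)) →
      f (⋂ i, J i) = ⨆ i, f (J i)) :
    IsCompact {y : ℝ | ∃ J : Set L, IsDualIdeal J ∧ f J = y} := by
  have hbdd : ∀ (J : ℕ → Set L), (∀ n, IsDualIdeal (J n)) →
      ∀ n : ℕ, BddAbove (Set.range fun m : {m : ℕ // n ≤ m} => f (J m.1)) := by
    intro J hJ n
    refine ⟨f (⋂ k, J k), ?_⟩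
    rintro x ⟨m, rfl⟩
    exact f_antitone f hint (iInter_dual hJ) (hJ m.1) (Set.iInter_subset J m.1)
  rw [Metric.isCompact_iff_isClosed_bounded]
  constructor
  · -- closedness
    apply IsSeqClosed.isClosed
    intro y yl hy hlim
    simp only [Set.mem_setOf_eq] at hy ⊢
    choose J hJ hfJ using hy
    obtain ⟨K, hKd, hKle, hKusc⟩ := master f husc hint J hJ
    refine ⟨K, hKd, ?_⟩
    have hle1 : f K ≤ yl := by
      apply le_of_forall_pos_le_add
      intro ε hε
      obtain ⟨N, hN⟩ := Metric.tendsto_atTop.1 hlim ε hε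
      refine le_trans (hKle N) (ciSup_le fun m => ?_)
      have h := hN m.1 m.2
      rw [Real.dist_eq, abs_sub_lt_iff] at h
      rw [hfJ m.1]
      linarith [h.1]
    have hle2 : yl ≤ f K := by
      apply le_of_forall_pos_le_add
      intro ε hε
      obtain ⟨N, hN⟩ := hKusc (ε / 2) (half_pos hε)
      obtain ⟨N', hN'⟩ := Metric.tendsto_atTop.1 hlim (ε / 2) (half_pos hε)
      have h1 : y (max N N') ≤ ⨆ m : {m : ℕ // N ≤ m}, f (J m.1) := by
        rw [← hfJ (max N N')]
        exact le_ciSup (hbdd J hJ N) ⟨max N N', le_max_left _ _⟩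
      have h2 := hN' (max N N') (le_max_right _ _)
      rw [Real.dist_eq, abs_sub_lt_iff] at h2
      linarith [h2.2]
    exact le_antisymm hle1 hle2
  · -- boundedness
    by_cases hex : ∃ J : Set L, IsDualIdeal J
    · obtain ⟨J₀, hJ₀⟩ := hex
      have htopne : (⊥ : L) ≠ ⊤ := fun h => hJ₀.2.1 (h ▸ top_mem hJ₀)
      have htop : IsDualIdeal ({⊤} : Set L) := by
        refine ⟨⟨⊤, rfl⟩, fun h => htopne h, ?_, ?_⟩
        · intro a ha b hb
          rw [Set.mem_singleton_iff] at ha hb ⊢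
          rw [ha, hb, inf_top_eq]
        · intro a ha b hab
          rw [Set.mem_singleton_iff] at ha ⊢
          exact top_le_iff.1 (ha ▸ hab)
      rw [isBounded_iff_bddBelow_bddAbove]
      constructor
      · by_contra hnb
        rw [not_bddBelow_iff] at hnb
        have hlt : ∀ n : ℕ, ∃ J : Set L, IsDualIdeal J ∧ f J < -(n : ℝ) := by
          intro n
          obtain ⟨v, ⟨J, hJ, rfl⟩, hv⟩ := hnb (-(n : ℝ))
          exact ⟨J, hJ, hv⟩
        choose J hJ hJlt using hlt
        obtain ⟨K, hKd, hKle, -⟩ := master f husc hint J hJ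
        have hK : ∀ n : ℕ, f K ≤ -(n : ℝ) := by
          intro n
          refine le_trans (hKle n) (ciSup_le fun m => ?_)
          have : -(m.1 : ℝ) ≤ -(n : ℝ) := by
            have := m.2; exact neg_le_neg (by exact_mod_cast this)
          linarith [hJlt m.1]
        obtain ⟨n, hn⟩ := exists_nat_gt (-(f K))
        linarith [hK n]
      · refine ⟨f ({⊤} : Set L), ?_⟩
        rintro v ⟨J, hJ, rfl⟩
        exact f_antitone f hint htop hJ (Set.singleton_subset_iff.2 (top_mem hJ))
    · have hS : {y : ℝ | ∃ J : Set L, IsDualIdeal J ∧ f J = y} = ∅ := by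
        ext v
        simp only [Set.mem_setOf_eq, Set.mem_empty_iff_false, iff_false]
        rintro ⟨J, hJ, -⟩
        exact hex ⟨J, hJ⟩
      rw [hS]
      exact Bornology.isBounded_empty
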